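/- Let G be a weighted directed graph with n vertices, m edges, and positive real edge weights, let β ≥ 2 be an integer, and let H ⊆ TC(G) be a set of hopset edges (each (u, v) ∈ H weighted dist_G(u, v)) such that φ(H) > 0, where the potential is taken with respect to hopbound parameter β. Then there exists a pair (u, v) ∈ TC(G) with Δ((u, v) | H) ≥ φ(H) / (2 · exopt(n, m + |H|, ⌊β/2⌋)). -/

import Mathlib

open scoped Classical

abbrev Edge (n : ℕ) := Fin n × Fin n

def IsPathList {n : ℕ} (E : Set (Edge n)) (l : List (Fin n)) : Prop :=
  l.Nodup ∧ l.Chain' (fun a b => (a, b) ∈ E)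

def IsPathFromTo {n : ℕ} (E : Set (Edge n)) (u v : Fin n) (l : List (Fin n)) : Prop :=
  IsPathList E l ∧ l.head? = some u ∧ l.getLast? = some v

def TCrel {n : ℕ} (E : Set (Edge n)) (u v : Fin n) : Prop :=
  u ≠ v ∧ ∃ l : List (Fin n), IsPathFromTo E u v l

def TCset {n : ℕ} (E : Set (Edge n)) : Set (Edge n) := {p | TCrel E p.1 p.2}

/-- The total weight of a path `l` under the weight function `w`. -/
def pathWeight {n : ℕ} (w : Edge n → ℝ) (l : List (Fin n)) : ℝ :=
  ((l.zip l.tail).map w).sum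

/-- `l` is a minimum-weight directed path from `s` to `t`. -/
def IsMinWeightPath {n : ℕ} (E : Set (Edge n)) (w : Edge n → ℝ) (s t : Fin n)
    (l : List (Fin n)) : Prop :=
  IsPathFromTo E s t l ∧ ∀ l', IsPathFromTo E s t l' → pathWeight w l ≤ pathWeight w l'

/-- The weighted distance: minimum total weight of a directed `s`–`t` path. -/
noncomputable def wdist {n : ℕ} (E : Set (Edge n)) (w : Edge n → ℝ) (s t : Fin n) : ℝ :=
  sInf {r : ℝ | ∃ l, IsPathFromTo E s t l ∧ pathWeight w l = r}

/-- `hopdist E w s t`: the minimum number of edges among all minimum-weight `s`–`t` paths. -/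
noncomputable def hopdist {n : ℕ} (E : Set (Edge n)) (w : Edge n → ℝ) (s t : Fin n) : ℕ :=
  sInf {k : ℕ | ∃ l, IsMinWeightPath E w s t l ∧ l.length = k + 1}

/-- The weight function of `G ∪ H`: each hopset edge `(u,v) ∈ H` is weighted `dist_G(u,v)`;
all other edges keep their original weight. -/
noncomputable def unionWeight {n : ℕ} (E : Set (Edge n)) (w : Edge n → ℝ) (H : Set (Edge n)) :
    Edge n → ℝ :=
  fun e => if e ∈ H then wdist E w e.1 e.2 else w e

/-- `H ⊆ TC(G)` is an exact hopset with hopbound `β` for the weighted graph `(E, w)`. -/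
def IsExactHopset {n : ℕ} (E : Set (Edge n)) (w : Edge n → ℝ) (H : Set (Edge n)) (β : ℕ) :
    Prop :=
  H ⊆ TCset E ∧ ∀ p ∈ TCset E, hopdist (E ∪ H) (unionWeight E w H) p.1 p.2 ≤ β

/-- `exopt N M β`: the least `h` such that every weighted directed graph with at most `N`
vertices, at most `M` edges and positive real edge weights admits an exact hopset of size
at most `h` with hopbound at most `β`. -/
noncomputable def exopt (N M β : ℕ) : ℕ :=
  sInf {h : ℕ | ∀ n' : ℕ, n' ≤ N → ∀ (E : Set (Edge n')) (w : Edge n' → ℝ),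
    E.ncard ≤ M → (∀ e ∈ E, 0 < w e) →
    ∃ H : Set (Edge n'), H.ncard ≤ h ∧ IsExactHopset E w H β}

/-- The (weighted) potential `φ(H)`: the sum of `hopdist_{G∪H}(s,t)` over all pairs `(s,t)`
in the transitive closure of `G` with `hopdist_{G∪H}(s,t) ≥ β`. -/
noncomputable def wpotential {n : ℕ} (E : Set (Edge n)) (w : Edge n → ℝ) (H : Set (Edge n))
    (β : ℕ) : ℕ :=
  ∑ p : Edge n,
    if TCrel E p.1 p.2 ∧ β ≤ hopdist (E ∪ H) (unionWeight E w H) p.1 p.2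
    then hopdist (E ∪ H) (unionWeight E w H) p.1 p.2 else 0

/-- `Δ((u,v) | H) = φ(H) - φ(H ∪ {(u,v)})` for the weighted potential. -/
noncomputable def wdelta {n : ℕ} (E : Set (Edge n)) (w : Edge n → ℝ) (H : Set (Edge n))
    (β : ℕ) (e : Edge n) : ℕ :=
  wpotential E w H β - wpotential E w (H ∪ {e}) β


-- ============ Stage 1: basics ============
section Basics
variable {n : ℕ}

def reach (E : Set (Edge n)) (u v : Fin n) : Prop := ∃ l, IsPathFromTo E u v l

def EWalk (E : Set (Edge n)) (u v : Fin n) (l : List (Fin n)) : Prop :=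
  l.Chain' (fun a b => (a, b) ∈ E) ∧ l.head? = some u ∧ l.getLast? = some v

lemma IsPathFromTo.walk {E : Set (Edge n)} {u v l} (h : IsPathFromTo E u v l) :
    EWalk E u v l := ⟨h.1.2, h.2⟩

lemma EWalk.ne_nil {E : Set (Edge n)} {u v l} (h : EWalk E u v l) : l ≠ [] := by
  rintro rfl; simp [EWalk] at h

lemma IsPathFromTo.ne_nil {E : Set (Edge n)} {u v l} (h : IsPathFromTo E u v l) : l ≠ [] :=
  h.walk.ne_nil

lemma singleton_path (E : Set (Edge n)) (u : Fin n) : IsPathFromTo E u u [u] := by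
  refine ⟨⟨List.nodup_singleton u, List.isChain_singleton u⟩, rfl, rfl⟩

lemma reach_self (E : Set (Edge n)) (u : Fin n) : reach E u u := ⟨[u], singleton_path E u⟩

lemma reach_mono {E₁ E₂ : Set (Edge n)} (h : E₁ ⊆ E₂) {u v} (hr : reach E₁ u v) :
    reach E₂ u v := by
  obtain ⟨l, hl⟩ := hr
  exact ⟨l, ⟨⟨hl.1.1, hl.1.2.imp fun a b hab => h hab⟩, hl.2⟩⟩

lemma IsPathFromTo.mono {E₁ E₂ : Set (Edge n)} (h : E₁ ⊆ E₂) {u v l}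
    (hl : IsPathFromTo E₁ u v l) : IsPathFromTo E₂ u v l :=
  ⟨⟨hl.1.1, hl.1.2.imp fun a b hab => h hab⟩, hl.2⟩

@[simp] lemma pathWeight_nil (w : Edge n → ℝ) : pathWeight w ([] : List (Fin n)) = 0 := rfl

@[simp] lemma pathWeight_single (w : Edge n → ℝ) (a : Fin n) : pathWeight w [a] = 0 := rfl

lemma pathWeight_cons (w : Edge n → ℝ) (a b : Fin n) (l : List (Fin n)) :
    pathWeight w (a :: b :: l) = w (a, b) + pathWeight w (b :: l) := by
  simp [pathWeight]

lemma pathWeight_pair (w : Edge n → ℝ) (a b : Fin n) : pathWeight w [a, b] = w (a, b) := by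
  simp [pathWeight]

lemma mem_zip_tail {R : Fin n → Fin n → Prop} :
    ∀ {l : List (Fin n)}, l.Chain' R → ∀ q ∈ l.zip l.tail, R q.1 q.2
  | [], _, q, hq => by simp at hq
  | [a], _, q, hq => by simp at hq
  | a :: b :: t, h, q, hq => by
      rw [List.Chain', List.isChain_cons_cons] at h
      simp only [List.tail_cons, List.zip_cons_cons, List.mem_cons] at hq
      rcases hq with rfl | hq
      · exact h.1
      · exact mem_zip_tail h.2 q hq

lemma pathWeight_nonneg' (f : Edge n → ℝ) (l : List (Fin n))
    (h : ∀ q ∈ l.zip l.tail, 0 ≤ f q) : 0 ≤ pathWeight f l := by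
  apply List.sum_nonneg
  intro x hx
  obtain ⟨q, hq, rfl⟩ := List.mem_map.mp hx
  exact h q hq

lemma pathWeight_mono' (f g : Edge n → ℝ) (l : List (Fin n))
    (h : ∀ q ∈ l.zip l.tail, f q ≤ g q) : pathWeight f l ≤ pathWeight g l := by
  unfold pathWeight
  apply List.sum_le_sum
  intro q hq
  exact h q hq

lemma pathWeight_nonneg {E : Set (Edge n)} {w : Edge n → ℝ} (hw : ∀ e ∈ E, 0 ≤ w e)
    {l : List (Fin n)} (hl : l.Chain' (fun a b => (a, b) ∈ E)) : 0 ≤ pathWeight w l :=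
  pathWeight_nonneg' w l fun q hq => hw q (mem_zip_tail hl q hq)

lemma pathWeight_mono {E : Set (Edge n)} {w₁ w₂ : Edge n → ℝ} (hw : ∀ e ∈ E, w₁ e ≤ w₂ e)
    {l : List (Fin n)} (hl : l.Chain' (fun a b => (a, b) ∈ E)) :
    pathWeight w₁ l ≤ pathWeight w₂ l :=
  pathWeight_mono' w₁ w₂ l fun q hq => hw q (mem_zip_tail hl q hq)

lemma pathWeight_pos {E : Set (Edge n)} {w : Edge n → ℝ} (hw : ∀ e ∈ E, 0 < w e)
    {a b : Fin n} {t : List (Fin n)} (hl : (a :: b :: t).Chain' (fun a b => (a, b) ∈ E)) :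
    0 < pathWeight w (a :: b :: t) := by
  rw [List.Chain', List.isChain_cons_cons] at hl
  rw [pathWeight_cons]
  have h1 : 0 < w (a, b) := hw _ hl.1
  have h2 : 0 ≤ pathWeight w (b :: t) := pathWeight_nonneg (fun e he => (hw e he).le) hl.2
  linarith

lemma pathWeight_append (w : Edge n → ℝ) :
    ∀ (l₁ : List (Fin n)) (l₂ : List (Fin n)) (x : Fin n),
      l₁.getLast? = some x → l₂.head? = some x →
      pathWeight w (l₁ ++ l₂.tail) = pathWeight w l₁ + pathWeight w l₂
  | [], l₂, x, h, _ => by simp at h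
  | [a], l₂, x, h, h2 => by
      simp at h
      subst h
      cases l₂ with
      | nil => simp at h2
      | cons b t =>
          simp at h2
          subst h2
          simp [pathWeight_single]
  | a :: b :: l₁, l₂, x, h, h2 => by
      have hgl : (b :: l₁).getLast? = some x := by
        rw [List.getLast?_cons_cons] at h; exact h
      have ih := pathWeight_append w (b :: l₁) l₂ x hgl h2
      have e1 : (a :: b :: l₁) ++ l₂.tail = a :: b :: (l₁ ++ l₂.tail) := by simp
      rw [e1, pathWeight_cons, pathWeight_cons,
        show b :: (l₁ ++ l₂.tail) = (b :: l₁) ++ l₂.tail from by simp, ih]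
      ring

lemma list_sum_map_add {α : Type*} (f g : α → ℝ) :
    ∀ L : List α, (L.map (fun e => f e + g e)).sum = (L.map f).sum + (L.map g).sum
  | [] => by simp
  | a :: t => by simp [list_sum_map_add f g t]; ring

lemma pathWeight_add (f g : Edge n → ℝ) (l : List (Fin n)) :
    pathWeight (fun e => f e + g e) l = pathWeight f l + pathWeight g l :=
  list_sum_map_add f g (l.zip l.tail)

lemma pathWeight_const (c : ℝ) (l : List (Fin n)) :
    pathWeight (fun _ => c) l = c * ((l.zip l.tail).length : ℝ) := by
  unfold pathWeight
  rw [List.map_const', List.sum_replicate]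
  simp [mul_comm]

lemma zip_tail_length {l : List (Fin n)} (h : l ≠ []) :
    (l.zip l.tail).length + 1 = l.length := by
  rw [List.length_zip]
  cases l with
  | nil => simp at h
  | cons a t => simp [Nat.min_def]

end Basics

-- ============ Stage 2: walks, cycle removal, attainment ============
section Stage2
variable {n : ℕ}

lemma EWalk.append {E : Set (Edge n)} {u x v : Fin n} {l₁ l₂ : List (Fin n)}
    (h₁ : EWalk E u x l₁) (h₂ : EWalk E x v l₂) :
    EWalk E u v (l₁ ++ l₂.tail) ∧
      (∀ w : Edge n → ℝ, pathWeight w (l₁ ++ l₂.tail) = pathWeight w l₁ + pathWeight w l₂) ∧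
      (l₁ ++ l₂.tail).length + 1 = l₁.length + l₂.length := by
  obtain ⟨c₁, hh₁, hl₁⟩ := h₁
  obtain ⟨c₂, hh₂, hl₂⟩ := h₂
  have hne₁ : l₁ ≠ [] := by rintro rfl; simp at hh₁
  cases l₂ with
  | nil => simp at hh₂
  | cons b t =>
    have hbx : b = x := by simp at hh₂; exact hh₂.symm ▸ rfl
    subst hbx
    refine ⟨⟨?_, ?_, ?_⟩, ?_, ?_⟩
    · -- chain
      rw [List.Chain', List.isChain_append]
      refine ⟨c₁, c₂.tail, ?_⟩
      intro y hy z hz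
      simp only [List.tail_cons] at hz
      rw [hl₁] at hy
      simp at hy
      subst hy
      cases t with
      | nil => simp at hz
      | cons c t' =>
        simp at hz
        subst hz
        exact (List.isChain_cons_cons.mp c₂).1
    · -- head
      rw [List.head?_append_of_ne_nil _ hne₁]
      exact hh₁
    · -- last
      simp only [List.tail_cons]
      cases t with
      | nil =>
        have hvx : b = v := by simpa using hl₂
        subst hvx
        simpa using hl₁
      | cons c t' =>
        rw [List.getLast?_append_of_ne_nil _ (by simp : (c :: t') ≠ [])]
        simpa using hl₂
    · intro w
      exact pathWeight_append w l₁ (b :: t) b hl₁ (by simp)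
    · simp only [List.length_append, List.tail_cons, List.length_cons]
      have : l₁.length ≥ 1 := List.length_pos_iff.mpr hne₁
      omega

lemma walk_to_path {E : Set (Edge n)} {w : Edge n → ℝ} (hw : ∀ e ∈ E, 0 ≤ w e) :
    ∀ (N : ℕ) (l : List (Fin n)) (u v : Fin n), l.length ≤ N → EWalk E u v l →
    ∃ l', IsPathFromTo E u v l' ∧ pathWeight w l' ≤ pathWeight w l ∧
      l'.length ≤ l.length ∧ ∀ x ∈ l', x ∈ l := by
  intro N
  induction N with
  | zero =>
    intro l u v hl hwalk
    have := hwalk.ne_nil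
    have : l.length > 0 := List.length_pos_iff.mpr this
    omega
  | succ N ih =>
    intro l u v hl hwalk
    obtain ⟨hc, hh, hgl⟩ := hwalk
    match l with
    | [a] =>
      simp at hh hgl
      subst hh; subst hgl
      exact ⟨[a], singleton_path E a, le_refl _, le_refl _, by simp⟩
    | a :: b :: t =>
      simp at hh
      subst hh
      by_cases ha : a ∈ b :: t
      · -- drop the cycle at the front
        obtain ⟨r₁, r₂, hsplit⟩ := List.append_of_mem ha
        have hldecomp : a :: b :: t = (a :: r₁ ++ [a]) ++ (a :: r₂).tail := by
          simp [hsplit]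
        have hchain2 : (a :: r₂).Chain' (fun a b => (a, b) ∈ E) := by
          have : (a :: b :: t).Chain' (fun a b => (a, b) ∈ E) := hc
          rw [show a :: b :: t = (a :: r₁) ++ (a :: r₂) from by simp [hsplit]] at this
          exact (List.isChain_append.mp this).2.1
        have hlast2 : (a :: r₂).getLast? = some v := by
          rw [show a :: b :: t = (a :: r₁) ++ (a :: r₂) from by simp [hsplit]] at hgl
          rwa [List.getLast?_append_of_ne_nil _ (by simp : (a :: r₂) ≠ [])] at hgl
        have hlen2 : (a :: r₂).length ≤ N := by
          have : (b :: t).length = r₁.length + r₂.length + 1 := by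
            rw [hsplit]; simp; omega
          simp at hl ⊢
          simp at this
          omega
        obtain ⟨l', hp', hw', hlen', hmem'⟩ := ih (a :: r₂) a v hlen2 ⟨hchain2, rfl, hlast2⟩
        refine ⟨l', hp', ?_, ?_, ?_⟩
        · -- weight
          have hsplitw : pathWeight w (a :: b :: t) =
              pathWeight w (a :: r₁ ++ [a]) + pathWeight w (a :: r₂) := by
            rw [hldecomp]
            refine pathWeight_append w _ _ a ?_ rfl
            rw [show a :: r₁ ++ [a] = (a :: r₁) ++ [a] from by simp,
              List.getLast?_append_of_ne_nil _ (by simp)]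
            simp
          have hchain1 : (a :: r₁ ++ [a]).Chain' (fun a b => (a, b) ∈ E) := by
            have h0 : (a :: b :: t).Chain' (fun a b => (a, b) ∈ E) := hc
            rw [show a :: b :: t = (a :: r₁) ++ (a :: r₂) from by simp [hsplit]] at h0
            rw [List.Chain', List.isChain_append] at h0 ⊢
            refine ⟨h0.1, List.isChain_singleton a, ?_⟩
            intro y hy z hz
            simp at hz
            subst hz
            exact h0.2.2 y hy a (by simp)
          have : 0 ≤ pathWeight w (a :: r₁ ++ [a]) := pathWeight_nonneg hw hchain1
          linarith
        · have : (a :: r₂).length ≤ (a :: b :: t).length := by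
            simp [hsplit]; omega
          omega
        · intro x hx
          have hmem := hmem' x hx
          rw [List.mem_cons] at hmem
          rcases hmem with rfl | hmem
          · exact List.mem_cons_self
          · have : x ∈ b :: t := by
              rw [hsplit]
              exact List.mem_append_right _ (List.mem_cons_of_mem _ hmem)
            exact List.mem_cons_of_mem _ this
      · -- a not repeated
        have hchain2 : (b :: t).Chain' (fun a b => (a, b) ∈ E) := (List.isChain_cons_cons.mp hc).2
        have hlast2 : (b :: t).getLast? = some v := by
          rwa [List.getLast?_cons_cons] at hgl
        have hlen2 : (b :: t).length ≤ N := by simp at hl ⊢; omega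
        obtain ⟨l', hp', hw', hlen', hmem'⟩ := ih (b :: t) b v hlen2 ⟨hchain2, rfl, hlast2⟩
        have hlne : l' ≠ [] := hp'.ne_nil
        obtain ⟨b', t', rfl⟩ := List.exists_cons_of_ne_nil hlne
        have hb0 : b' = b := by
          have := hp'.2.1
          simpa using this
        have hb' : b = b' := hb0.symm
        subst hb'
        have hnodup : (a :: b :: t').Nodup :=
          List.nodup_cons.mpr ⟨fun hmem => ha (hmem' a hmem), hp'.1.1⟩
        have hchain : (a :: b :: t').Chain' (fun a b => (a, b) ∈ E) :=
          List.isChain_cons_cons.mpr ⟨(List.isChain_cons_cons.mp hc).1, hp'.1.2⟩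
        have hlast : (a :: b :: t').getLast? = some v := by
          rw [List.getLast?_cons_cons]
          exact hp'.2.2
        refine ⟨a :: b :: t', ⟨⟨hnodup, hchain⟩, rfl, hlast⟩, ?_, ?_, ?_⟩
        · rw [pathWeight_cons, pathWeight_cons]
          exact add_le_add (le_refl _) hw'
        · simp at hlen' ⊢; omega
        · intro x hx
          rw [List.mem_cons] at hx
          rcases hx with rfl | hx
          · exact List.mem_cons_self
          · exact List.mem_cons_of_mem _ (hmem' x hx)

end Stage2

-- ============ Stage 3: finiteness, attainment, wdist/hopdist ============
section Stage3
variable {n : ℕ}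

lemma paths_finite (E : Set (Edge n)) (u v : Fin n) :
    {l : List (Fin n) | IsPathFromTo E u v l}.Finite := by
  apply Set.Finite.subset (List.finite_length_le (Fin n) n)
  intro l hl
  have : l.Nodup := hl.1.1
  have := this.length_le_card
  simpa using this

lemma pathlists_finite (E : Set (Edge n)) :
    {l : List (Fin n) | IsPathList E l}.Finite := by
  apply Set.Finite.subset (List.finite_length_le (Fin n) n)
  intro l hl
  have := hl.1.length_le_card
  simpa using this

lemma wdist_set_eq (E : Set (Edge n)) (w : Edge n → ℝ) (u v : Fin n) :
    {r : ℝ | ∃ l, IsPathFromTo E u v l ∧ pathWeight w l = r} =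
      pathWeight w '' {l | IsPathFromTo E u v l} := by
  ext r
  simp [Set.mem_image]

lemma wdist_le {E : Set (Edge n)} {w : Edge n → ℝ} {u v : Fin n} {l : List (Fin n)}
    (h : IsPathFromTo E u v l) : wdist E w u v ≤ pathWeight w l := by
  rw [wdist, wdist_set_eq]
  exact csInf_le ((paths_finite E u v).image (pathWeight w)).bddBelow ⟨l, h, rfl⟩

lemma exists_min (E : Set (Edge n)) (w : Edge n → ℝ) (u v : Fin n) (h : reach E u v) :
    ∃ l, IsMinWeightPath E w u v l ∧ pathWeight w l = wdist E w u v := by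
  obtain ⟨l₀, hl₀⟩ := h
  have hne : (pathWeight w '' {l | IsPathFromTo E u v l}).Nonempty := ⟨_, ⟨l₀, hl₀, rfl⟩⟩
  have hfin := (paths_finite E u v).image (pathWeight w)
  have hmem := hne.csInf_mem hfin
  obtain ⟨l₁, hl₁, hpw⟩ := hmem
  refine ⟨l₁, ⟨hl₁, fun l' h' => ?_⟩, ?_⟩
  · rw [hpw]
    exact csInf_le hfin.bddBelow ⟨l', h', rfl⟩
  · rw [wdist, wdist_set_eq]
    exact hpw

lemma minWeight_of_eq {E : Set (Edge n)} {w : Edge n → ℝ} {u v : Fin n} {l : List (Fin n)}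
    (h : IsPathFromTo E u v l) (hw : pathWeight w l = wdist E w u v) :
    IsMinWeightPath E w u v l :=
  ⟨h, fun l' h' => hw ▸ wdist_le h'⟩

lemma minWeight_pw {E : Set (Edge n)} {w : Edge n → ℝ} {u v : Fin n} {l : List (Fin n)}
    (h : IsMinWeightPath E w u v l) : pathWeight w l = wdist E w u v := by
  obtain ⟨l₁, hl₁, hpw⟩ := exists_min E w u v ⟨l, h.1⟩
  exact le_antisymm (hpw ▸ h.2 l₁ hl₁.1) (wdist_le h.1)

lemma hopdist_le_of_min {E : Set (Edge n)} {w : Edge n → ℝ} {u v : Fin n} {l : List (Fin n)}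
    (h : IsMinWeightPath E w u v l) : hopdist E w u v + 1 ≤ l.length := by
  have hne : l ≠ [] := h.1.ne_nil
  have hpos : 0 < l.length := List.length_pos_iff.mpr hne
  have : hopdist E w u v ≤ l.length - 1 := Nat.sInf_le ⟨l, h, by omega⟩
  omega

lemma exists_hop_witness (E : Set (Edge n)) (w : Edge n → ℝ) (u v : Fin n)
    (h : reach E u v) :
    ∃ l, IsMinWeightPath E w u v l ∧ l.length = hopdist E w u v + 1 := by
  obtain ⟨l₁, hl₁, _⟩ := exists_min E w u v h
  have hne : l₁ ≠ [] := hl₁.1.ne_nil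
  have hpos : 0 < l₁.length := List.length_pos_iff.mpr hne
  have : {k : ℕ | ∃ l, IsMinWeightPath E w u v l ∧ l.length = k + 1}.Nonempty :=
    ⟨l₁.length - 1, l₁, hl₁, by omega⟩
  exact Nat.sInf_mem this

lemma hopdist_lt_n {E : Set (Edge n)} {w : Edge n → ℝ} {u v : Fin n} (h : reach E u v) :
    hopdist E w u v + 1 ≤ n := by
  obtain ⟨l, hl, hlen⟩ := exists_hop_witness E w u v h
  have := hl.1.1.1.length_le_card
  simp at this
  omega

lemma wdist_nonneg {E : Set (Edge n)} {w : Edge n → ℝ} (hw : ∀ e ∈ E, 0 ≤ w e)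
    {u v : Fin n} (h : reach E u v) : 0 ≤ wdist E w u v := by
  obtain ⟨l, hl, hpw⟩ := exists_min E w u v h
  rw [← hpw]
  exact pathWeight_nonneg hw hl.1.1.2

lemma wdist_self {E : Set (Edge n)} {w : Edge n → ℝ} (hw : ∀ e ∈ E, 0 ≤ w e) (u : Fin n) :
    wdist E w u u = 0 :=
  le_antisymm (by simpa using wdist_le (singleton_path E u))
    (wdist_nonneg hw (reach_self E u))

lemma hopdist_self {E : Set (Edge n)} {w : Edge n → ℝ} (hw : ∀ e ∈ E, 0 ≤ w e) (u : Fin n) :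
    hopdist E w u u = 0 := by
  have hmin : IsMinWeightPath E w u u [u] := by
    refine ⟨singleton_path E u, fun l' h' => ?_⟩
    simpa using pathWeight_nonneg hw h'.1.2
  have hm : (0 : ℕ) ∈ {k : ℕ | ∃ l, IsMinWeightPath E w u u l ∧ l.length = k + 1} :=
    ⟨[u], hmin, by simp⟩
  have h0 : hopdist E w u u ≤ 0 := Nat.sInf_le hm
  omega

lemma path_two_of_ne {E : Set (Edge n)} {u v : Fin n} {l : List (Fin n)}
    (h : IsPathFromTo E u v l) (huv : u ≠ v) :
    ∃ b t, l = u :: b :: t := by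
  obtain ⟨a, t₀, rfl⟩ := List.exists_cons_of_ne_nil h.ne_nil
  have ha : a = u := by simpa using h.2.1
  subst ha
  cases t₀ with
  | nil =>
    exfalso
    have := h.2.2
    exact huv (by simpa using this)
  | cons b t => exact ⟨b, t, rfl⟩

lemma wdist_pos {E : Set (Edge n)} {w : Edge n → ℝ} (hw : ∀ e ∈ E, 0 < w e)
    {u v : Fin n} (h : reach E u v) (huv : u ≠ v) : 0 < wdist E w u v := by
  obtain ⟨l, hl, hpw⟩ := exists_min E w u v h
  rw [← hpw]
  obtain ⟨b, t, rfl⟩ := path_two_of_ne hl.1 huv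
  exact pathWeight_pos hw hl.1.1.2

lemma edge_path {E : Set (Edge n)} {e : Edge n} (he : e ∈ E) (hne : e.1 ≠ e.2) :
    IsPathFromTo E e.1 e.2 [e.1, e.2] := by
  refine ⟨⟨by simp [hne], ?_⟩, rfl, rfl⟩
  rw [List.Chain', List.isChain_pair]
  exact he

lemma wdist_le_edge {E : Set (Edge n)} {w : Edge n → ℝ} (hw : ∀ e ∈ E, 0 ≤ w e)
    {e : Edge n} (he : e ∈ E) : wdist E w e.1 e.2 ≤ w e := by
  by_cases hne : e.1 = e.2
  · rw [← hne] at *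
    rw [wdist_self hw]
    exact hw e he
  · have := wdist_le (w := w) (edge_path he hne)
    rwa [pathWeight_pair] at this

end Stage3

-- ============ Stage 4: transfer and union facts ============
section Stage4
variable {n : ℕ}

lemma walk_path {E : Set (Edge n)} {w : Edge n → ℝ} (hw : ∀ e ∈ E, 0 ≤ w e)
    {l : List (Fin n)} {u v : Fin n} (h : EWalk E u v l) :
    ∃ l', IsPathFromTo E u v l' ∧ pathWeight w l' ≤ pathWeight w l ∧ l'.length ≤ l.length :=
  by
  obtain ⟨l', h1, h2, h3, _⟩ := walk_to_path hw l.length l u v (le_refl _) h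
  exact ⟨l', h1, h2, h3⟩

lemma transfer {E₁ : Set (Edge n)} {w₁ : Edge n → ℝ} (hw₁ : ∀ e ∈ E₁, 0 ≤ w₁ e)
    {E₂ : Set (Edge n)} {w₂ : Edge n → ℝ}
    (hE : ∀ e ∈ E₂, reach E₁ e.1 e.2 ∧ wdist E₁ w₁ e.1 e.2 ≤ w₂ e) :
    ∀ (l : List (Fin n)) (u v : Fin n), EWalk E₂ u v l →
      ∃ l', IsPathFromTo E₁ u v l' ∧ pathWeight w₁ l' ≤ pathWeight w₂ l := by
  intro l
  induction l with
  | nil => intro u v h; exact absurd rfl h.ne_nil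
  | cons a t ih =>
    intro u v h
    obtain ⟨hc, hh, hgl⟩ := h
    have ha : a = u := by simpa using hh
    subst ha
    cases t with
    | nil =>
      have : a = v := by simpa using hgl
      subst this
      exact ⟨[a], singleton_path E₁ a, by simp⟩
    | cons b t' =>
      have hab : (a, b) ∈ E₂ := (List.isChain_cons_cons.mp hc).1
      obtain ⟨hr, hwd⟩ := hE (a, b) hab
      obtain ⟨p₁, hp₁, hpw₁⟩ := exists_min E₁ w₁ a b hr
      have hlast2 : (b :: t').getLast? = some v := by
        rwa [List.getLast?_cons_cons] at hgl
      obtain ⟨p₂, hp₂, hpw₂⟩ := ih b v ⟨(List.isChain_cons_cons.mp hc).2, rfl, hlast2⟩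
      obtain ⟨hwalk, hwt, _⟩ := EWalk.append hp₁.1.walk hp₂.walk
      obtain ⟨l', hl', hle, _⟩ := walk_path hw₁ hwalk
      refine ⟨l', hl', ?_⟩
      have := hwt w₁
      rw [pathWeight_cons]
      calc pathWeight w₁ l' ≤ pathWeight w₁ (p₁ ++ p₂.tail) := hle
        _ = pathWeight w₁ p₁ + pathWeight w₁ p₂ := this
        _ ≤ w₂ (a, b) + pathWeight w₂ (b :: t') := by
            have := hpw₁.symm ▸ hwd
            linarith [hpw₁, hpw₂]
  
lemma wdist_transfer {E₁ : Set (Edge n)} {w₁ : Edge n → ℝ} (hw₁ : ∀ e ∈ E₁, 0 ≤ w₁ e)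
    {E₂ : Set (Edge n)} {w₂ : Edge n → ℝ}
    (hE : ∀ e ∈ E₂, reach E₁ e.1 e.2 ∧ wdist E₁ w₁ e.1 e.2 ≤ w₂ e)
    {u v : Fin n} (h₂ : reach E₂ u v) :
    reach E₁ u v ∧ wdist E₁ w₁ u v ≤ wdist E₂ w₂ u v := by
  obtain ⟨l, hl⟩ := h₂
  obtain ⟨l', hl', _⟩ := transfer hw₁ hE l u v hl.walk
  refine ⟨⟨l', hl'⟩, ?_⟩
  have hrw : wdist E₂ w₂ u v = sInf (pathWeight w₂ '' {l | IsPathFromTo E₂ u v l}) := by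
    rw [wdist, wdist_set_eq]
  rw [hrw]
  refine le_csInf ⟨pathWeight w₂ l, ⟨l, hl, rfl⟩⟩ ?_
  rintro r ⟨l₂, hl₂, rfl⟩
  obtain ⟨l₁', h₁', hle⟩ := transfer hw₁ hE l₂ u v hl₂.walk
  exact (wdist_le h₁').trans hle

lemma wdist_antimono {E₁ E₂ : Set (Edge n)} {w₁ w₂ : Edge n → ℝ} (hsub : E₁ ⊆ E₂)
    (hw : ∀ e ∈ E₁, w₂ e ≤ w₁ e) {u v : Fin n} (h : reach E₁ u v) :
    reach E₂ u v ∧ wdist E₂ w₂ u v ≤ wdist E₁ w₁ u v := by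
  obtain ⟨l₀, hl₀, hpw⟩ := exists_min E₁ w₁ u v h
  have hp₂ : IsPathFromTo E₂ u v l₀ := hl₀.1.mono hsub
  refine ⟨⟨l₀, hp₂⟩, ?_⟩
  calc wdist E₂ w₂ u v ≤ pathWeight w₂ l₀ := wdist_le hp₂
    _ ≤ pathWeight w₁ l₀ := pathWeight_mono hw hl₀.1.1.2
    _ = wdist E₁ w₁ u v := hpw

lemma wdist_empty_of_not_reach {E : Set (Edge n)} {w : Edge n → ℝ} {u v : Fin n}
    (h : ¬ reach E u v) : wdist E w u v = 0 := by
  rw [wdist]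
  convert Real.sInf_empty
  rw [Set.eq_empty_iff_forall_notMem]
  rintro r ⟨l, hl, _⟩
  exact h ⟨l, hl⟩

lemma hopdist_empty_of_not_reach {E : Set (Edge n)} {w : Edge n → ℝ} {u v : Fin n}
    (h : ¬ reach E u v) : hopdist E w u v = 0 := by
  rw [hopdist]
  convert Nat.sInf_empty
  rw [Set.eq_empty_iff_forall_notMem]
  rintro k ⟨l, hl, _⟩
  exact h ⟨l, hl.1⟩

/-- Master facts about `G ∪ H` for `H ⊆ TC(G)`. -/
lemma union_facts {E : Set (Edge n)} {w : Edge n → ℝ} (hw : ∀ e ∈ E, 0 < w e)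
    {H : Set (Edge n)} (hH : H ⊆ TCset E) :
    (∀ e ∈ E ∪ H, reach E e.1 e.2 ∧ wdist E w e.1 e.2 ≤ unionWeight E w H e) ∧
    (∀ e ∈ E ∪ H, 0 < unionWeight E w H e) ∧
    (∀ u v : Fin n, reach (E ∪ H) u v ↔ reach E u v) ∧
    (∀ u v : Fin n, wdist (E ∪ H) (unionWeight E w H) u v = wdist E w u v) ∧
    TCset (E ∪ H) = TCset E := by
  have hwnn : ∀ e ∈ E, 0 ≤ w e := fun e he => (hw e he).le
  have ha : ∀ e ∈ E ∪ H, reach E e.1 e.2 ∧ wdist E w e.1 e.2 ≤ unionWeight E w H e := by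
    intro e he
    by_cases heH : e ∈ H
    · have := hH heH
      refine ⟨this.2, ?_⟩
      rw [unionWeight, if_pos heH]
    · rcases he with heE | heH'
      · refine ⟨?_, ?_⟩
        · by_cases hne : e.1 = e.2
          · rw [← hne]; exact reach_self E e.1
          · exact ⟨_, edge_path heE hne⟩
        · rw [unionWeight, if_neg heH]
          exact wdist_le_edge hwnn heE
      · exact absurd heH' heH
  have hb : ∀ e ∈ E ∪ H, 0 < unionWeight E w H e := by
    intro e he
    by_cases heH : e ∈ H
    · rw [unionWeight, if_pos heH]
      have := hH heH
      exact wdist_pos hw this.2 this.1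
    · rcases he with heE | heH'
      · rw [unionWeight, if_neg heH]; exact hw e heE
      · exact absurd heH' heH
  have hc : ∀ u v : Fin n, reach (E ∪ H) u v ↔ reach E u v := by
    intro u v
    constructor
    · intro h
      exact (wdist_transfer hwnn ha h).1
    · exact reach_mono Set.subset_union_left
  have hWle : ∀ e ∈ E, unionWeight E w H e ≤ w e := by
    intro e he
    by_cases heH : e ∈ H
    · rw [unionWeight, if_pos heH]
      exact wdist_le_edge hwnn he
    · rw [unionWeight, if_neg heH]
  have hd : ∀ u v : Fin n, wdist (E ∪ H) (unionWeight E w H) u v = wdist E w u v := by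
    intro u v
    by_cases hr : reach E u v
    · exact le_antisymm (wdist_antimono Set.subset_union_left hWle hr).2
        (wdist_transfer hwnn ha ((hc u v).mpr hr)).2
    · rw [wdist_empty_of_not_reach hr, wdist_empty_of_not_reach (fun h => hr ((hc u v).mp h))]
  refine ⟨ha, hb, hc, hd, ?_⟩
  ext e
  simp only [TCset, Set.mem_setOf_eq, TCrel]
  rw [show (∃ l, IsPathFromTo (E ∪ H) e.1 e.2 l) ↔ reach (E ∪ H) e.1 e.2 from Iff.rfl]
  rw [hc e.1 e.2]
  rfl

/-- Monotonicity of hopdist when enlarging the hopset. -/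
lemma hopdist_mono {E : Set (Edge n)} {w : Edge n → ℝ} (hw : ∀ e ∈ E, 0 < w e)
    {H₁ H₂ : Set (Edge n)} (h12 : H₁ ⊆ H₂) (hH₂ : H₂ ⊆ TCset E) (u v : Fin n) :
    hopdist (E ∪ H₂) (unionWeight E w H₂) u v ≤ hopdist (E ∪ H₁) (unionWeight E w H₁) u v := by
  have hH₁ : H₁ ⊆ TCset E := h12.trans hH₂
  obtain ⟨ha₁, hb₁, hc₁, hd₁, _⟩ := union_facts hw hH₁
  obtain ⟨ha₂, hb₂, hc₂, hd₂, _⟩ := union_facts hw hH₂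
  by_cases hr : reach E u v
  · obtain ⟨l₀, hl₀, hlen₀⟩ := exists_hop_witness (E ∪ H₁) (unionWeight E w H₁) u v
      ((hc₁ u v).mpr hr)
    have hsub : E ∪ H₁ ⊆ E ∪ H₂ := Set.union_subset_union_right E h12
    have hp₂ : IsPathFromTo (E ∪ H₂) u v l₀ := hl₀.1.mono hsub
    have hWle : ∀ e ∈ E ∪ H₁, unionWeight E w H₂ e ≤ unionWeight E w H₁ e := by
      intro e he
      by_cases he2 : e ∈ H₂
      · rw [unionWeight, if_pos he2]
        exact (ha₁ e he).2
      · have he1 : e ∉ H₁ := fun h => he2 (h12 h)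
        rw [unionWeight, if_neg he2, unionWeight, if_neg he1]
    have hle : pathWeight (unionWeight E w H₂) l₀ ≤ pathWeight (unionWeight E w H₁) l₀ :=
      pathWeight_mono hWle hl₀.1.1.2
    have heq : pathWeight (unionWeight E w H₂) l₀ = wdist (E ∪ H₂) (unionWeight E w H₂) u v := by
      apply le_antisymm
      · rw [hd₂, ← hd₁]
        exact hle.trans (le_of_eq (minWeight_pw hl₀))
      · exact wdist_le hp₂
    have hmin₂ : IsMinWeightPath (E ∪ H₂) (unionWeight E w H₂) u v l₀ :=
      minWeight_of_eq hp₂ heq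
    have := hopdist_le_of_min hmin₂
    omega
  · rw [hopdist_empty_of_not_reach (fun h => hr ((hc₂ u v).mp h))]
    exact Nat.zero_le _

end Stage4

-- ============ Stage 5: zip split, build_walk, perturbation, TC hopset ============
section Stage5
variable {n : ℕ}

lemma zip_split : ∀ {l : List (Fin n)} {q : Edge n}, q ∈ l.zip l.tail →
    ∃ l₁ l₂, l = l₁ ++ q.1 :: q.2 :: l₂
  | [], q, hq => by simp at hq
  | [a], q, hq => by simp at hq
  | a :: b :: t, q, hq => by
      simp only [List.tail_cons, List.zip_cons_cons, List.mem_cons] at hq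
      rcases hq with rfl | hq
      · exact ⟨[], t, by simp⟩
      · obtain ⟨l₁, l₂, hsplit⟩ := zip_split hq
        exact ⟨a :: l₁, l₂, by simp [hsplit]⟩

lemma zip_tail_nodup : ∀ {l : List (Fin n)}, l.Nodup → (l.zip l.tail).Nodup
  | [], _ => by simp
  | [a], _ => by simp
  | a :: b :: t, h => by
      simp only [List.tail_cons, List.zip_cons_cons]
      refine List.nodup_cons.mpr ⟨?_, zip_tail_nodup (List.nodup_cons.mp h).2⟩
      intro hmem
      have : a ∈ b :: t := (List.of_mem_zip hmem).1
      exact (List.nodup_cons.mp h).1 this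

lemma le_wdist {E : Set (Edge n)} {w : Edge n → ℝ} {u v : Fin n} {c : ℝ}
    (hr : reach E u v) (h : ∀ l, IsPathFromTo E u v l → c ≤ pathWeight w l) :
    c ≤ wdist E w u v := by
  have hrw : wdist E w u v = sInf (pathWeight w '' {l | IsPathFromTo E u v l}) := by
    rw [wdist, wdist_set_eq]
  rw [hrw]
  obtain ⟨l₀, hl₀⟩ := hr
  refine le_csInf ⟨pathWeight w l₀, ⟨l₀, hl₀, rfl⟩⟩ ?_
  rintro r ⟨l, hl, rfl⟩
  exact h l hl

lemma build_walk {E : Set (Edge n)} {w : Edge n → ℝ} (hw : ∀ e ∈ E, 0 ≤ w e) :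
    ∀ (l : List (Fin n)) (u v : Fin n), l.Chain' (fun a b => reach E a b) →
      l.head? = some u → l.getLast? = some v →
      ∃ lw, EWalk E u v lw ∧
        pathWeight w lw = pathWeight (fun q => wdist E w q.1 q.2) l ∧
        (lw.length : ℝ) = 1 + pathWeight (fun q => (hopdist E w q.1 q.2 : ℝ)) l := by
  intro l
  induction l with
  | nil => intro u v _ hh _; simp at hh
  | cons a t ih =>
    intro u v hc hh hgl
    have ha : a = u := by simpa using hh
    subst ha
    cases t with
    | nil =>
      have : a = v := by simpa using hgl
      subst this
      exact ⟨[a], ⟨List.isChain_singleton a, rfl, rfl⟩, by simp, by simp⟩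
    | cons b t' =>
      have hab : reach E a b := (List.isChain_cons_cons.mp hc).1
      obtain ⟨p₁, hp₁, hlen₁⟩ := exists_hop_witness E w a b hab
      have hpw₁ : pathWeight w p₁ = wdist E w a b := minWeight_pw hp₁
      have hlast2 : (b :: t').getLast? = some v := by
        rwa [List.getLast?_cons_cons] at hgl
      obtain ⟨lw', hw', hpw', hlen'⟩ := ih b v (List.isChain_cons_cons.mp hc).2 rfl hlast2
      obtain ⟨hwalk, hwt, hlent⟩ := EWalk.append hp₁.1.walk hw'
      refine ⟨p₁ ++ lw'.tail, hwalk, ?_, ?_⟩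
      · simp only [pathWeight_cons]
        rw [hwt w, hpw₁, hpw']
      · have hcast : ((p₁ ++ lw'.tail).length : ℝ) + 1 = (p₁.length : ℝ) + (lw'.length : ℝ) := by
          exact_mod_cast hlent
        have h₁ : (p₁.length : ℝ) = (hopdist E w a b : ℝ) + 1 := by exact_mod_cast hlen₁
        simp only [pathWeight_cons]
        linarith [hcast, h₁, hlen']

/-- The set of all path weights. -/
def WSet (E : Set (Edge n)) (w : Edge n → ℝ) : Set ℝ :=
  {x | ∃ l, IsPathList E l ∧ pathWeight w l = x}

lemma WSet_finite (E : Set (Edge n)) (w : Edge n → ℝ) : (WSet E w).Finite := by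
  have : WSet E w = pathWeight w '' {l | IsPathList E l} := by
    ext x; simp [WSet, Set.mem_image]
  rw [this]
  exact (pathlists_finite E).image _

lemma wdist_mem_WSet {E : Set (Edge n)} {w : Edge n → ℝ} {u v : Fin n} (hr : reach E u v) :
    wdist E w u v ∈ WSet E w := by
  obtain ⟨l, hl, hpw⟩ := exists_min E w u v hr
  exact ⟨l, hl.1.1, hpw⟩

lemma pw_mem_WSet {E : Set (Edge n)} {w : Edge n → ℝ} {u v : Fin n} {l : List (Fin n)}
    (hl : IsPathFromTo E u v l) : pathWeight w l ∈ WSet E w := ⟨l, hl.1, rfl⟩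

noncomputable def gapOf (E : Set (Edge n)) (w : Edge n → ℝ) : ℝ :=
  sInf ({x | 0 < x ∧ ∃ a ∈ WSet E w, ∃ b ∈ WSet E w, a - b = x} ∪ {1})

lemma gapOf_facts (E : Set (Edge n)) (w : Edge n → ℝ) :
    0 < gapOf E w ∧ ∀ a ∈ WSet E w, ∀ b ∈ WSet E w, b < a → gapOf E w ≤ a - b := by
  set Ω := {x | 0 < x ∧ ∃ a ∈ WSet E w, ∃ b ∈ WSet E w, a - b = x} with hΩ
  have hΩfin : Ω.Finite := by
    apply Set.Finite.subset (Set.Finite.image2 (fun a b => a - b)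
      (WSet_finite E w) (WSet_finite E w))
    rintro x ⟨_, a, ha, b, hb, rfl⟩
    exact Set.mem_image2_of_mem ha hb
  have hfin : (Ω ∪ {1}).Finite := hΩfin.union (Set.finite_singleton 1)
  have hne : (Ω ∪ {1}).Nonempty := ⟨1, Or.inr rfl⟩
  have hmem := hne.csInf_mem hfin
  constructor
  · rcases hmem with h | h
    · exact h.1
    · have h1 : sInf (Ω ∪ {1}) = 1 := h
      rw [gapOf, ← hΩ, h1]
      norm_num
  · intro a ha b hb hba
    have : a - b ∈ Ω := ⟨by linarith, a, ha, b, hb, rfl⟩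
    exact csInf_le hfin.bddBelow (Or.inl this)

/-- Perturbing all weights by the same small δ: the perturbed distance records both the
distance and the hop-distance, and perturbed min-weight paths are min-weight min-hop. -/
lemma perturb_wdist {E : Set (Edge n)} {w : Edge n → ℝ} (hw : ∀ e ∈ E, 0 ≤ w e)
    {δ : ℝ} (hδ : 0 < δ) (hδn : δ * (n : ℝ) < gapOf E w) (u v : Fin n) (hr : reach E u v) :
    wdist E (fun e => w e + δ) u v = wdist E w u v + δ * (hopdist E w u v : ℝ) ∧
    ∀ l, IsMinWeightPath E (fun e => w e + δ) u v l →
      pathWeight w l = wdist E w u v ∧ l.length = hopdist E w u v + 1 := by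
  set w' := fun e : Edge n => w e + δ with hw'
  have hpw' : ∀ l : List (Fin n), l ≠ [] →
      pathWeight w' l = pathWeight w l + δ * ((l.length : ℝ) - 1) := by
    intro l hl
    rw [hw']
    rw [show pathWeight (fun e => w e + δ) l =
      pathWeight w l + pathWeight (fun _ => δ) l from pathWeight_add w (fun _ => δ) l]
    rw [pathWeight_const]
    have := zip_tail_length hl
    have : ((l.zip l.tail).length : ℝ) = (l.length : ℝ) - 1 := by
      push_cast [← this]; ring
    rw [this]
  have hdn : (hopdist E w u v : ℝ) ≤ (n : ℝ) := by
    have h := hopdist_lt_n (w := w) hr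
    exact_mod_cast Nat.le_of_succ_le h
  obtain ⟨l₀, hl₀, hlen₀⟩ := exists_hop_witness E w u v hr
  have hpw₀ : pathWeight w l₀ = wdist E w u v := minWeight_pw hl₀
  have hstar₀ : pathWeight w' l₀ = wdist E w u v + δ * (hopdist E w u v : ℝ) := by
    rw [hpw' l₀ hl₀.1.ne_nil, hpw₀, hlen₀]
    push_cast
    ring
  have gf := gapOf_facts E w
  have hlow : ∀ l, IsPathFromTo E u v l →
      wdist E w u v + δ * (hopdist E w u v : ℝ) ≤ pathWeight w' l := by
    intro l hl
    have hne := hl.ne_nil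
    rw [hpw' l hne]
    have hge : wdist E w u v ≤ pathWeight w l := wdist_le hl
    rcases eq_or_lt_of_le hge with heq | hlt
    · have hmin : IsMinWeightPath E w u v l := minWeight_of_eq hl heq.symm
      have hhop := hopdist_le_of_min hmin
      have hlenR : (hopdist E w u v : ℝ) ≤ (l.length : ℝ) - 1 := by
        have : (hopdist E w u v : ℝ) + 1 ≤ (l.length : ℝ) := by exact_mod_cast hhop
        linarith
      nlinarith [hδ]
    · have hgap := gf.2 (pathWeight w l) (pw_mem_WSet hl) (wdist E w u v)
        (wdist_mem_WSet hr) hlt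
      have h1 : 0 ≤ δ * ((l.length : ℝ) - 1) := by
        have : (1 : ℝ) ≤ (l.length : ℝ) := by exact_mod_cast List.length_pos_iff.mpr hne
        nlinarith
      have h2 : δ * (hopdist E w u v : ℝ) ≤ δ * (n : ℝ) := by nlinarith
      linarith
  have hwd : wdist E w' u v = wdist E w u v + δ * (hopdist E w u v : ℝ) := by
    apply le_antisymm
    · rw [← hstar₀]
      exact wdist_le hl₀.1
    · exact le_wdist hr hlow
  refine ⟨hwd, ?_⟩
  intro l hl
  have hpwl : pathWeight w' l = wdist E w u v + δ * (hopdist E w u v : ℝ) := by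
    rw [← hwd]
    exact minWeight_pw hl
  have hne := hl.1.ne_nil
  have hsplit := hpw' l hne
  have hge : wdist E w u v ≤ pathWeight w l := wdist_le hl.1
  rcases eq_or_lt_of_le hge with heq | hlt
  · refine ⟨heq.symm, ?_⟩
    have hmul : δ * ((l.length : ℝ) - 1) = δ * (hopdist E w u v : ℝ) := by
      rw [hsplit, ← heq] at hpwl
      linarith
    have hlen : ((l.length : ℝ)) = (hopdist E w u v : ℝ) + 1 := by
      have := mul_left_cancel₀ (ne_of_gt hδ) hmul
      linarith
    exact_mod_cast hlen
  · exfalso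
    have hgap := gf.2 (pathWeight w l) (pw_mem_WSet hl.1) (wdist E w u v)
      (wdist_mem_WSet hr) hlt
    have h1 : 0 ≤ δ * ((l.length : ℝ) - 1) := by
      have : (1 : ℝ) ≤ (l.length : ℝ) := by exact_mod_cast List.length_pos_iff.mpr hne
      nlinarith
    have h2 : δ * (hopdist E w u v : ℝ) ≤ δ * (n : ℝ) := by nlinarith
    linarith [hsplit, hpwl]

/-- The transitive closure is an exact hopset with hopbound 1 (hence any β ≥ 1). -/
lemma tc_hopset {n' : ℕ} (E : Set (Edge n')) (w : Edge n' → ℝ) (hw : ∀ e ∈ E, 0 < w e)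
    (β : ℕ) (hβ : 1 ≤ β) : IsExactHopset E w (TCset E) β := by
  obtain ⟨ha, hb, hc, hd, he⟩ := union_facts hw (le_refl (TCset E))
  refine ⟨le_refl _, ?_⟩
  intro p hp
  have hne : p.1 ≠ p.2 := hp.1
  have hedge : p ∈ E ∪ TCset E := Set.mem_union_right E hp
  have hpath : IsPathFromTo (E ∪ TCset E) p.1 p.2 [p.1, p.2] := edge_path hedge hne
  have hpw : pathWeight (unionWeight E w (TCset E)) [p.1, p.2] =
      wdist (E ∪ TCset E) (unionWeight E w (TCset E)) p.1 p.2 := by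
    rw [pathWeight_pair, hd p.1 p.2, unionWeight, if_pos hp]
  have hmin := minWeight_of_eq hpath hpw
  have hm : (1 : ℕ) ∈ {k : ℕ | ∃ l, IsMinWeightPath (E ∪ TCset E) (unionWeight E w (TCset E))
      p.1 p.2 l ∧ l.length = k + 1} := ⟨[p.1, p.2], hmin, by simp⟩
  have h1 : hopdist (E ∪ TCset E) (unionWeight E w (TCset E)) p.1 p.2 ≤ 1 := Nat.sInf_le hm
  omega

/-- `exopt` really works: its defining set is nonempty, so `exopt` belongs to it. -/
lemma exopt_spec (N M β : ℕ) (hβ : 1 ≤ β) :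
    ∀ n' : ℕ, n' ≤ N → ∀ (E : Set (Edge n')) (w : Edge n' → ℝ),
      E.ncard ≤ M → (∀ e ∈ E, 0 < w e) →
      ∃ H : Set (Edge n'), H.ncard ≤ exopt N M β ∧ IsExactHopset E w H β := by
  have hmem : (N * N) ∈ {h : ℕ | ∀ n' : ℕ, n' ≤ N → ∀ (E : Set (Edge n')) (w : Edge n' → ℝ),
      E.ncard ≤ M → (∀ e ∈ E, 0 < w e) →
      ∃ H : Set (Edge n'), H.ncard ≤ h ∧ IsExactHopset E w H β} := by
    intro n' hn' E w _ hw
    refine ⟨TCset E, ?_, tc_hopset E w hw β hβ⟩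
    have h1 : (TCset E).ncard ≤ (Set.univ : Set (Edge n')).ncard :=
      Set.ncard_le_ncard (Set.subset_univ _) Set.finite_univ
    have h2 : (Set.univ : Set (Edge n')).ncard = n' * n' := by
      rw [Set.ncard_univ]
      simp [Nat.card_eq_fintype_card]
    calc (TCset E).ncard ≤ n' * n' := h1.trans_eq h2
      _ ≤ N * N := Nat.mul_le_mul hn' hn'
  exact Nat.sInf_mem ⟨N * N, hmem⟩

end Stage5

-- ============ Stage 6: final helpers ============
section Stage6
variable {n : ℕ}

lemma list_sum_map_mul {α : Type*} (c : ℝ) (f : α → ℝ) :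
    ∀ L : List α, (L.map (fun e => c * f e)).sum = c * (L.map f).sum
  | [] => by simp
  | a :: t => by simp [list_sum_map_mul c f t]; ring

lemma pathWeight_smul (c : ℝ) (f : Edge n → ℝ) (l : List (Fin n)) :
    pathWeight (fun e => c * f e) l = c * pathWeight f l :=
  list_sum_map_mul c f (l.zip l.tail)

lemma list_sum_map_sub {α : Type*} (f g : α → ℝ) :
    ∀ L : List α, (L.map (fun e => f e - g e)).sum = (L.map f).sum - (L.map g).sum
  | [] => by simp
  | a :: t => by simp [list_sum_map_sub f g t]; ring

lemma zip_tail_ne {l : List (Fin n)} (h : l.Nodup) {q : Edge n} (hq : q ∈ l.zip l.tail) :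
    q.1 ≠ q.2 := by
  obtain ⟨l₁, l₂, rfl⟩ := zip_split hq
  have := List.Nodup.of_append_right h
  rw [List.nodup_cons] at this
  intro he
  exact this.1 (he ▸ List.mem_cons_self)

lemma hopdist_pos {E : Set (Edge n)} {w : Edge n → ℝ} {u v : Fin n} (hne : u ≠ v)
    (hr : reach E u v) : 1 ≤ hopdist E w u v := by
  obtain ⟨l, hl, hlen⟩ := exists_hop_witness E w u v hr
  obtain ⟨b, t, rfl⟩ := path_two_of_ne hl.1 hne
  simp at hlen
  omega

lemma EWalk.mono {E₁ E₂ : Set (Edge n)} (h : E₁ ⊆ E₂) {u v l} (hw : EWalk E₁ u v l) :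
    EWalk E₂ u v l := ⟨hw.1.imp fun a b hab => h hab, hw.2.1, hw.2.2⟩

lemma unionWeight_pos_mem {n : ℕ} {E : Set (Edge n)} {w : Edge n → ℝ} {H : Set (Edge n)}
    {e : Edge n} (h : e ∈ H) : unionWeight E w H e = wdist E w e.1 e.2 := if_pos h

lemma unionWeight_neg_mem {n : ℕ} {E : Set (Edge n)} {w : Edge n → ℝ} {H : Set (Edge n)}
    {e : Edge n} (h : e ∉ H) : unionWeight E w H e = w e := if_neg h

end Stage6


set_option maxHeartbeats 2000000 in
/-- **Potential Reduction Lemma for hopsets.** Let `G` be a weighted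
directed graph with `n` vertices, `m` edges and positive real edge weights, `β ≥ 2` an
integer, and `H ⊆ TC(G)` a set of hopset edges with `φ(H) > 0`. Then some
`(u,v) ∈ TC(G)` satisfies `Δ((u,v) | H) ≥ φ(H) / (2 · exopt(n, m + |H|, ⌊β/2⌋))`. -/
theorem potential_reduction_hopset :
    ∀ (n : ℕ) (E : Set (Edge n)) (w : Edge n → ℝ), (∀ e ∈ E, 0 < w e) →
      ∀ β : ℕ, 2 ≤ β →
        ∀ H : Set (Edge n), H ⊆ TCset E → 0 < wpotential E w H β →
          ∃ e ∈ TCset E,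
            (wdelta E w H β e : ℝ) ≥
              (wpotential E w H β : ℝ) /
                (2 * (exopt n (E.ncard + H.ncard) (β / 2) : ℝ)) := by
  intro n E w hw β hβ H hH hφ
  classical
  obtain ⟨fa, fb, fc, fd, fe⟩ := union_facts hw hH
  set E' := E ∪ H with hE'def
  set w' := unionWeight E w H with hw'def
  have hwnn : ∀ e ∈ E, 0 ≤ w e := fun e he => (hw e he).le
  have hw'nn : ∀ e ∈ E', 0 ≤ w' e := fun e he => (fb e he).le
  -- perturbation parameters
  have hgap0 : 0 < gapOf E' w' := (gapOf_facts E' w').1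
  set gap := gapOf E' w' with hgapdef
  set δ := gap / (2 * ((n : ℝ) + 1)) with hδdef
  have hn1 : (0:ℝ) < (n : ℝ) + 1 := by positivity
  have hδ : 0 < δ := by rw [hδdef]; positivity
  have hδn : δ * (n : ℝ) < gap := by
    rw [hδdef, div_mul_eq_mul_div, div_lt_iff₀ (by positivity)]
    nlinarith
  set ws : Edge n → ℝ := fun e => w' e + δ with hwsdef
  have hwspos : ∀ e ∈ E', 0 < ws e := by
    intro e he
    have := fb e he
    rw [hwsdef]
    dsimp only
    linarith
  have hperturb : ∀ u v : Fin n, reach E' u v →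
      wdist E' ws u v = wdist E' w' u v + δ * (hopdist E' w' u v : ℝ) ∧
      ∀ l, IsMinWeightPath E' ws u v l →
        pathWeight w' l = wdist E' w' u v ∧ l.length = hopdist E' w' u v + 1 := by
    intro u v hr
    rw [hwsdef]
    exact perturb_wdist hw'nn hδ hδn u v hr
  -- obtain the optimal hopset for the perturbed graph
  have hb1 : 1 ≤ β / 2 := by omega
  obtain ⟨F, hFcard, hFhs⟩ := exopt_spec n (E.ncard + H.ncard) (β / 2) hb1 n (le_refl n)
      E' ws (Set.ncard_union_le E H) hwspos
  have hFsub : F ⊆ TCset E' := hFhs.1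
  have hFsubE : F ⊆ TCset E := fe ▸ hFsub
  obtain ⟨ga, gb, gc, gd, ge⟩ := union_facts hwspos hFsub
  set E₂ := E' ∪ F with hE₂def
  set w₂ := unionWeight E' ws F with hw₂def
  set Ffin := (Set.toFinite F).toFinset with hFfindef
  have hFfinmem : ∀ q : Edge n, q ∈ Ffin ↔ q ∈ F := fun q => Set.Finite.mem_toFinset _
  -- contributions
  set c : Edge n → Set (Edge n) → ℕ := fun p A =>
    if TCrel E p.1 p.2 ∧ β ≤ hopdist (E ∪ A) (unionWeight E w A) p.1 p.2
    then hopdist (E ∪ A) (unionWeight E w A) p.1 p.2 else 0 with hcdef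
  have hφsum : ∀ A : Set (Edge n), wpotential E w A β = ∑ p : Edge n, c p A :=
    fun A => rfl
  have hcmono : ∀ (p q : Edge n), q ∈ TCset E → c p (H ∪ {q}) ≤ c p H := by
    intro p q hq
    have hHq : H ∪ {q} ⊆ TCset E := Set.union_subset hH (by simpa using hq)
    have hmono := hopdist_mono hw Set.subset_union_left hHq p.1 p.2
    rw [hcdef]
    dsimp only
    split_ifs with h1 h2
    · exact hmono
    · exfalso; exact h2 ⟨h1.1, le_trans h1.2 hmono⟩
    · exact Nat.zero_le _
    · exact le_refl 0
  set D : Edge n → ℝ := fun q => wdist E' w' q.1 q.2 with hDdef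
  set Hd : Edge n → ℝ := fun q => (hopdist E' w' q.1 q.2 : ℝ) with hHddef
  -- ============== per-pair estimate ==============
  have key : ∀ s t : Fin n, TCrel E s t → β ≤ hopdist E' w' s t →
      (hopdist E' w' s t : ℝ) - ((β / 2 : ℕ) : ℝ) ≤
        ∑ q ∈ Ffin, ((c (s, t) H : ℝ) - (c (s, t) (H ∪ {q}) : ℝ)) := by
    intro s t htc hbd
    have hDq : ∀ q : Edge n, D q = wdist E' w' q.1 q.2 := fun _ => rfl
    have hHq : ∀ q : Edge n, Hd q = (hopdist E' w' q.1 q.2 : ℝ) := fun _ => rfl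
    set d := hopdist E' w' s t with hddef
    have hrE : reach E s t := htc.2
    have hrE' : reach E' s t := (fc s t).mpr hrE
    have hstTC2 : (s, t) ∈ TCset E' := ⟨htc.1, hrE'⟩
    have hhop2 : hopdist E₂ w₂ s t ≤ β / 2 := hFhs.2 (s, t) hstTC2
    have hreach₂ : reach E₂ s t := reach_mono Set.subset_union_left hrE'
    obtain ⟨P, hP, hPlen⟩ := exists_hop_witness E₂ w₂ s t hreach₂
    have cP : P.Chain' (fun a b => (a, b) ∈ E₂) := hP.1.1.2
    have hPnodup : P.Nodup := hP.1.1.1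
    have hPhead : P.head? = some s := hP.1.2.1
    have hPlast : P.getLast? = some t := hP.1.2.2
    have hzl : ∀ q ∈ P.zip P.tail, q ∈ E₂ ∧ reach E' q.1 q.2 ∧ D q + δ * Hd q ≤ w₂ q := by
      intro q hq
      have hqE₂ : q ∈ E₂ := mem_zip_tail cP q hq
      have hreachq : reach E' q.1 q.2 := (ga q hqE₂).1
      refine ⟨hqE₂, hreachq, ?_⟩
      have h1 : wdist E' ws q.1 q.2 ≤ w₂ q := (ga q hqE₂).2
      have h2 : wdist E' ws q.1 q.2 = D q + δ * Hd q := (hperturb q.1 q.2 hreachq).1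
      rw [← h2]
      exact h1
    have hrflsum : ∀ f : Edge n → ℝ, ((P.zip P.tail).map f).sum = pathWeight f P :=
      fun _ => rfl
    have hpwP : pathWeight w₂ P = wdist E' w' s t + δ * (d : ℝ) := by
      have h1 : pathWeight w₂ P = wdist E₂ w₂ s t := minWeight_pw hP
      rw [h1, gd s t]
      exact (hperturb s t hrE').1
    have hDHle : pathWeight D P + δ * pathWeight Hd P ≤ pathWeight w₂ P := by
      have hmono := pathWeight_mono' (fun q => D q + δ * Hd q) w₂ P
        (fun q hq => (hzl q hq).2.2)
      calc pathWeight D P + δ * pathWeight Hd P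
          = pathWeight (fun q => D q + δ * Hd q) P := by
            rw [pathWeight_add, pathWeight_smul]
        _ ≤ pathWeight w₂ P := hmono
    have crP : P.Chain' (fun a b => reach E' a b) :=
      cP.imp fun a b hab => (ga (a, b) hab).1
    obtain ⟨lw, hlw, hlwW, hlwL⟩ := build_walk hw'nn P s t crP hPhead hPlast
    have hlwW' : pathWeight w' lw = pathWeight D P := hlwW
    have hlwL' : (lw.length : ℝ) = 1 + pathWeight Hd P := hlwL
    obtain ⟨lt₀, hlt₀, hltW, hltL⟩ := walk_path hw'nn hlw
    have hSDge : wdist E' w' s t ≤ pathWeight D P := (wdist_le hlt₀).trans (hltW.trans_eq hlwW')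
    have hSHnn : 0 ≤ pathWeight Hd P :=
      pathWeight_nonneg' Hd P fun q _ => by rw [hHq]; positivity
    have hSHle : pathWeight Hd P ≤ (d : ℝ) := by nlinarith [hDHle, hSDge, hpwP, hδ]
    have hdn : (d : ℝ) ≤ (n : ℝ) := by
      have h0 := hopdist_lt_n (w := w') hrE'
      have h1 : d + 1 ≤ n := h0
      exact_mod_cast Nat.le_of_succ_le h1
    have hSHge : (d : ℝ) ≤ pathWeight Hd P := by
      have hge : wdist E' w' s t ≤ pathWeight w' lt₀ := wdist_le hlt₀
      rcases eq_or_lt_of_le hge with heq | hlt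
      · have hmin : IsMinWeightPath E' w' s t lt₀ := minWeight_of_eq hlt₀ heq.symm
        have hhop : d + 1 ≤ lt₀.length := hopdist_le_of_min hmin
        have h1 : (d : ℝ) + 1 ≤ (lt₀.length : ℝ) := by exact_mod_cast hhop
        have h2 : (lt₀.length : ℝ) ≤ (lw.length : ℝ) := by exact_mod_cast hltL
        linarith [hlwL']
      · exfalso
        have hgaple := (gapOf_facts E' w').2 (pathWeight w' lt₀) (pw_mem_WSet hlt₀)
          (wdist E' w' s t) (wdist_mem_WSet hrE') hlt
        have h1 : pathWeight w' lt₀ ≤ pathWeight D P := hltW.trans_eq hlwW'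
        nlinarith [hDHle, hpwP, hSHnn, hδ, hdn, hδn]
    have hSH : pathWeight Hd P = (d : ℝ) := le_antisymm hSHle hSHge
    have hSD : pathWeight D P = wdist E' w' s t := by
      rw [hSH] at hDHle
      linarith [hpwP, hSDge, hDHle]
    have hslack : ∀ q ∈ P.zip P.tail, w₂ q = D q + δ * Hd q := by
      intro q hq
      have hnn : ∀ x ∈ (P.zip P.tail).map (fun q => w₂ q - (D q + δ * Hd q)), 0 ≤ x := by
        intro x hx
        obtain ⟨q', hq', rfl⟩ := List.mem_map.mp hx
        have := (hzl q' hq').2.2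
        linarith
      have hsum0 : ((P.zip P.tail).map (fun q => w₂ q - (D q + δ * Hd q))).sum = 0 := by
        rw [list_sum_map_sub, hrflsum, hrflsum, pathWeight_add, pathWeight_smul,
          hpwP, hSD, hSH]
        ring
      have hle := List.single_le_sum hnn _ (List.mem_map_of_mem hq)
      have h0 := hnn _ (List.mem_map_of_mem hq)
      rw [hsum0] at hle
      linarith
    have hnotF : ∀ q ∈ P.zip P.tail, q ∉ F → Hd q = 1 := by
      intro q hq hqF
      have hqE₂ := (hzl q hq).1
      have hqE' : q ∈ E' := by
        rcases hqE₂ with h | h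
        · exact h
        · exact absurd h hqF
      have hw₂q : w₂ q = ws q := unionWeight_neg_mem hqF
      have heq := hslack q hq
      have hne := zip_tail_ne hPnodup hq
      have hreachq := (hzl q hq).2.1
      have hDle : D q ≤ w' q := wdist_le_edge hw'nn hqE'
      have hd1 : (1 : ℝ) ≤ Hd q := by
        rw [hHq]
        exact_mod_cast hopdist_pos hne hreachq
      have hHdn : Hd q ≤ (n : ℝ) := by
        rw [hHq]
        exact_mod_cast Nat.le_of_succ_le (hopdist_lt_n hreachq)
      have hwsq : ws q = w' q + δ := rfl
      rw [hw₂q, hwsq] at heq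
      rcases eq_or_lt_of_le hDle with hDeq | hDlt
      · rw [← hDeq] at heq
        have h1 : δ * 1 = δ * Hd q := by linarith
        have := mul_left_cancel₀ (ne_of_gt hδ) h1
        linarith
      · exfalso
        have hmemw' : w' q ∈ WSet E' w' :=
          ⟨[q.1, q.2], (edge_path hqE' hne).1, pathWeight_pair w' q.1 q.2⟩
        have hmemD : D q ∈ WSet E' w' := wdist_mem_WSet hreachq
        have hgaple := (gapOf_facts E' w').2 (w' q) hmemw' (D q) hmemD hDlt
        have hδHd : δ * Hd q ≤ δ * (n : ℝ) := by nlinarith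
        linarith [hδn]
    have hdropQ : ∀ q ∈ P.zip P.tail,
        Hd q - 1 ≤ (c (s, t) H : ℝ) - (c (s, t) (H ∪ {q}) : ℝ) := by
      intro q hq
      obtain ⟨P₁, P₂, hPsplit⟩ := zip_split hq
      have hqTC : q ∈ TCset E := ⟨zip_tail_ne hPnodup hq, (fc q.1 q.2).mp (hzl q hq).2.1⟩
      have hHq2 : H ∪ {q} ⊆ TCset E := Set.union_subset hH (by simpa using hqTC)
      obtain ⟨qa, qb, qc', qd', qe'⟩ := union_facts hw hHq2
      set wn := unionWeight E w (H ∪ {q}) with hwndef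
      set u₁ : List (Fin n) := P₁ ++ [q.1] with hu₁
      set u₂ : List (Fin n) := q.2 :: P₂ with hu₂
      have hu₁ne : u₁ ≠ [] := by rw [hu₁]; simp
      have hPeq : P = u₁ ++ (q.1 :: u₂).tail := by rw [hu₁, hu₂, hPsplit]; simp; exact hu₂
      have hlast₁ : u₁.getLast? = some q.1 := by
        rw [hu₁, List.getLast?_append_of_ne_nil _ (by simp)]
        simp
      have hsplitF : ∀ f : Edge n → ℝ,
          pathWeight f P = pathWeight f u₁ + f q + pathWeight f u₂ := by
        intro f
        rw [hPeq, pathWeight_append f u₁ (q.1 :: u₂) q.1 hlast₁ rfl, hu₂, pathWeight_cons]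
        simp only [Prod.mk.eta]
        ring
      have hchains := cP
      rw [hPsplit, List.Chain', List.isChain_append] at hchains
      obtain ⟨cP₁, cc, clink⟩ := hchains
      have cu₂ : u₂.Chain' (fun a b => (a, b) ∈ E₂) := (List.isChain_cons_cons.mp cc).2
      have cu₁ : u₁.Chain' (fun a b => (a, b) ∈ E₂) := by
        rw [hu₁, List.Chain', List.isChain_append]
        refine ⟨cP₁, List.isChain_singleton _, ?_⟩
        intro y hy z hz
        simp at hz
        subst hz
        exact clink y hy q.1 (by simp)
      have hheadu₁ : u₁.head? = some s := by
        have h0 := hPhead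
        rw [hPeq, List.head?_append_of_ne_nil _ hu₁ne] at h0
        exact h0
      have hlastu₂ : u₂.getLast? = some t := by
        have h0 := hPlast
        rw [hPsplit, List.getLast?_append_of_ne_nil _
          (by simp : (q.1 :: q.2 :: P₂) ≠ []), List.getLast?_cons_cons] at h0
        exact h0
      have cru₁ : u₁.Chain' (fun a b => reach E' a b) :=
        cu₁.imp fun a b hab => (ga (a, b) hab).1
      have cru₂ : u₂.Chain' (fun a b => reach E' a b) :=
        cu₂.imp fun a b hab => (ga (a, b) hab).1
      obtain ⟨lw₁, hlw₁, hlw₁W, hlw₁L⟩ := build_walk hw'nn u₁ s q.1 cru₁ hheadu₁ hlast₁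
      obtain ⟨lw₂, hlw₂, hlw₂W, hlw₂L⟩ := build_walk hw'nn u₂ q.2 t cru₂ (by rw [hu₂]; simp) hlastu₂
      have hlw₁W' : pathWeight w' lw₁ = pathWeight D u₁ := hlw₁W
      have hlw₂W' : pathWeight w' lw₂ = pathWeight D u₂ := hlw₂W
      have hlw₁L' : (lw₁.length : ℝ) = 1 + pathWeight Hd u₁ := hlw₁L
      have hlw₂L' : (lw₂.length : ℝ) = 1 + pathWeight Hd u₂ := hlw₂L
      have hsubE' : E' ⊆ E ∪ (H ∪ {q}) := by
        rw [hE'def]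
        exact Set.union_subset_union_right E Set.subset_union_left
      have hwalk₁ : EWalk (E ∪ (H ∪ {q})) s q.1 lw₁ := hlw₁.mono hsubE'
      have hwalk₂ : EWalk (E ∪ (H ∪ {q})) q.2 t lw₂ := hlw₂.mono hsubE'
      have hqmem : q ∈ E ∪ (H ∪ {q}) :=
        Set.mem_union_right _ (Set.mem_union_right _ rfl)
      have hmid : EWalk (E ∪ (H ∪ {q})) q.1 q.2 [q.1, q.2] := by
        refine ⟨?_, rfl, rfl⟩
        rw [List.Chain', List.isChain_pair]
        simpa using hqmem
      obtain ⟨hwalk₁₂, hwt₁₂, hlen₁₂⟩ := EWalk.append hwalk₁ hmid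
      obtain ⟨hwalkF, hwtF, hlenF⟩ := EWalk.append hwalk₁₂ hwalk₂
      have hwnle : ∀ e ∈ E', wn e ≤ w' e := by
        intro e he
        by_cases heq : e ∈ H ∪ {q}
        · have h1 : wn e = wdist E w e.1 e.2 := unionWeight_pos_mem heq
          rw [h1]
          exact (fa e he).2
        · have heH : e ∉ H := fun h => heq (Set.mem_union_left _ h)
          have h1 : wn e = w e := unionWeight_neg_mem heq
          have h2 : w' e = w e := unionWeight_neg_mem heH
          rw [h1, h2]
      have hWlw₁ : pathWeight wn lw₁ ≤ pathWeight w' lw₁ := pathWeight_mono hwnle hlw₁.1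
      have hWlw₂ : pathWeight wn lw₂ ≤ pathWeight w' lw₂ := pathWeight_mono hwnle hlw₂.1
      have hwnq : wn q = D q := by
        have h1 : wn q = wdist E w q.1 q.2 :=
          unionWeight_pos_mem (Set.mem_union_right _ rfl)
        rw [h1, hDq]
        exact (fd q.1 q.2).symm
      have htotW : pathWeight wn (lw₁ ++ [q.1, q.2].tail ++ lw₂.tail) ≤ wdist E' w' s t := by
        rw [hwtF wn, hwt₁₂ wn, pathWeight_pair]
        have hq_eta : wn (q.1, q.2) = wn q := rfl
        rw [hq_eta, hwnq]
        have h3 := hsplitF D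
        linarith [hWlw₁, hWlw₂, hlw₁W', hlw₂W', hSD]
      have hwn_nn : ∀ e ∈ E ∪ (H ∪ {q}), 0 ≤ wn e := fun e he => (qb e he).le
      obtain ⟨pf, hpf, hpfW, hpfL⟩ := walk_path hwn_nn hwalkF
      have hwdeq : wdist (E ∪ (H ∪ {q})) wn s t = wdist E' w' s t := by
        rw [qd' s t, fd s t]
      have hpfmin : IsMinWeightPath (E ∪ (H ∪ {q})) wn s t pf := by
        apply minWeight_of_eq hpf
        apply le_antisymm
        · exact hpfW.trans (htotW.trans_eq hwdeq.symm)
        · exact wdist_le hpf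
      have hhopnew := hopdist_le_of_min hpfmin
      have hlenN : (lw₁ ++ [q.1, q.2].tail ++ lw₂.tail).length = lw₁.length + lw₂.length := by
        simp only [List.length_append, List.tail_cons, List.length_cons,
          List.length_nil] at hlen₁₂ hlenF ⊢
        omega
      have hHdsum : pathWeight Hd u₁ + Hd q + pathWeight Hd u₂ = (d : ℝ) := by
        rw [← hsplitF Hd, hSH]
      have hdnewR : (hopdist (E ∪ (H ∪ {q})) wn s t : ℝ) ≤ 1 + (d : ℝ) - Hd q := by
        have h1 : (hopdist (E ∪ (H ∪ {q})) wn s t : ℝ) + 1 ≤ (pf.length : ℝ) := by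
          exact_mod_cast hhopnew
        have h2 : (pf.length : ℝ) ≤ ((lw₁ ++ [q.1, q.2].tail ++ lw₂.tail).length : ℝ) := by
          exact_mod_cast hpfL
        have h3 : ((lw₁ ++ [q.1, q.2].tail ++ lw₂.tail).length : ℝ) =
            (lw₁.length : ℝ) + (lw₂.length : ℝ) := by exact_mod_cast hlenN
        rw [h3] at h2
        linarith [hlw₁L', hlw₂L', hHdsum]
      have hcH : (c (s, t) H : ℝ) = (d : ℝ) := by
        have h0 : c (s, t) H = if TCrel E s t ∧ β ≤ hopdist E' w' s t
            then hopdist E' w' s t else 0 := rfl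
        rw [h0, if_pos ⟨htc, hbd⟩]
      have hcHq : c (s, t) (H ∪ {q}) =
          if TCrel E s t ∧ β ≤ hopdist (E ∪ (H ∪ {q})) wn s t
          then hopdist (E ∪ (H ∪ {q})) wn s t else 0 := rfl
      rw [hcH, hcHq]
      split_ifs with hg
      · have hnn0 : (0 : ℝ) ≤ (hopdist (E ∪ (H ∪ {q})) wn s t : ℝ) := by positivity
        linarith [hdnewR]
      · have hHnn₁ : 0 ≤ pathWeight Hd u₁ :=
          pathWeight_nonneg' Hd u₁ fun r _ => by rw [hHq]; positivity
        have hHnn₂ : 0 ≤ pathWeight Hd u₂ :=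
          pathWeight_nonneg' Hd u₂ fun r _ => by rw [hHq]; positivity
        push_cast
        linarith [hHdsum]
    have hzlnodup : (P.zip P.tail).Nodup := zip_tail_nodup hPnodup
    have hkle : (P.zip P.tail).length ≤ β / 2 := by
      have h1 := zip_tail_length hP.1.ne_nil
      omega
    have hsum_all : ∑ q ∈ (P.zip P.tail).toFinset, (Hd q - 1) =
        (d : ℝ) - ((P.zip P.tail).length : ℝ) := by
      rw [List.sum_toFinset _ hzlnodup]
      rw [list_sum_map_sub Hd (fun _ => (1 : ℝ)), hrflsum Hd, hSH]
      have h1 : ((P.zip P.tail).map (fun _ => (1 : ℝ))).sum = ((P.zip P.tail).length : ℝ) := by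
        rw [List.map_const', List.sum_replicate, nsmul_eq_mul, mul_one]
      rw [h1]
    have hsum_F : ∑ q ∈ (P.zip P.tail).toFinset.filter (fun q => q ∈ F), (Hd q - 1) =
        (d : ℝ) - ((P.zip P.tail).length : ℝ) := by
      rw [← hsum_all]
      apply Finset.sum_subset (Finset.filter_subset _ _)
      intro q hq hqn
      have hqzl : q ∈ P.zip P.tail := List.mem_toFinset.mp hq
      have hqF : q ∉ F := by
        intro hqF
        exact hqn (Finset.mem_filter.mpr ⟨hq, hqF⟩)
      rw [hnotF q hqzl hqF]
      ring
    have hsub1 : (P.zip P.tail).toFinset.filter (fun q => q ∈ F) ⊆ Ffin := by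
      intro q hq
      rw [Finset.mem_filter] at hq
      rw [hFfinmem]
      exact hq.2
    calc (d : ℝ) - ((β / 2 : ℕ) : ℝ)
        ≤ (d : ℝ) - ((P.zip P.tail).length : ℝ) := by
          have h1 : ((P.zip P.tail).length : ℝ) ≤ ((β / 2 : ℕ) : ℝ) := by exact_mod_cast hkle
          linarith
      _ = ∑ q ∈ (P.zip P.tail).toFinset.filter (fun q => q ∈ F), (Hd q - 1) := hsum_F.symm
      _ ≤ ∑ q ∈ (P.zip P.tail).toFinset.filter (fun q => q ∈ F),
            ((c (s, t) H : ℝ) - (c (s, t) (H ∪ {q}) : ℝ)) := by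
          apply Finset.sum_le_sum
          intro q hq
          exact hdropQ q (List.mem_toFinset.mp (Finset.mem_filter.mp hq).1)
      _ ≤ ∑ q ∈ Ffin, ((c (s, t) H : ℝ) - (c (s, t) (H ∪ {q}) : ℝ)) := by
          apply Finset.sum_le_sum_of_subset_of_nonneg hsub1
          intro q hq _
          have hqTC : q ∈ TCset E := hFsubE ((hFfinmem q).mp hq)
          have h1 := hcmono (s, t) q hqTC
          have h2 : ((c (s, t) (H ∪ {q}) : ℕ) : ℝ) ≤ ((c (s, t) H : ℕ) : ℝ) := by
            exact_mod_cast h1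
          linarith
  -- ============== global estimate ==============
  have hglobal : (wpotential E w H β : ℝ) / 2 ≤ ∑ q ∈ Ffin, (wdelta E w H β q : ℝ) := by
    set Bad : Finset (Edge n) := Finset.univ.filter
      (fun p : Edge n => TCrel E p.1 p.2 ∧ β ≤ hopdist E' w' p.1 p.2) with hBaddef
    have hφBad : (wpotential E w H β : ℝ) = ∑ p ∈ Bad, (hopdist E' w' p.1 p.2 : ℝ) := by
      rw [hφsum H, hBaddef, Finset.sum_filter]
      push_cast
      apply Finset.sum_congr rfl
      intro p _
      have hcp : c p H = if TCrel E p.1 p.2 ∧ β ≤ hopdist E' w' p.1 p.2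
          then hopdist E' w' p.1 p.2 else 0 := rfl
      rw [hcp]
      split_ifs with hg <;> simp
    have hperq : ∀ q ∈ Ffin, ∑ p ∈ Bad, ((c p H : ℝ) - (c p (H ∪ {q}) : ℝ)) ≤
        (wdelta E w H β q : ℝ) := by
      intro q hq
      have hqTC : q ∈ TCset E := hFsubE ((hFfinmem q).mp hq)
      have hmono : wpotential E w (H ∪ {q}) β ≤ wpotential E w H β := by
        rw [hφsum, hφsum]
        exact Finset.sum_le_sum fun p _ => hcmono p q hqTC
      have hcast : (wdelta E w H β q : ℝ) =
          (wpotential E w H β : ℝ) - (wpotential E w (H ∪ {q}) β : ℝ) := by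
        rw [wdelta, Nat.cast_sub hmono]
      rw [hcast, hφsum H, hφsum (H ∪ {q})]
      push_cast
      rw [← Finset.sum_sub_distrib]
      apply Finset.sum_le_sum_of_subset_of_nonneg
      · rw [hBaddef]; exact Finset.filter_subset _ _
      · intro p _ _
        have h1 := hcmono p q hqTC
        have h2 : (c p (H ∪ {q}) : ℝ) ≤ (c p H : ℝ) := by exact_mod_cast h1
        linarith
    have hhalf : ∀ p ∈ Bad, (hopdist E' w' p.1 p.2 : ℝ) / 2 ≤
        ∑ q ∈ Ffin, ((c p H : ℝ) - (c p (H ∪ {q}) : ℝ)) := by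
      intro p hp
      rw [hBaddef, Finset.mem_filter] at hp
      obtain ⟨-, htc, hbd⟩ := hp
      have hk := key p.1 p.2 htc hbd
      have hb2 : ((β / 2 : ℕ) : ℝ) ≤ (hopdist E' w' p.1 p.2 : ℝ) / 2 := by
        have h1 : ((β / 2 : ℕ) : ℝ) ≤ (β : ℝ) / 2 := Nat.cast_div_le
        have h2 : (β : ℝ) ≤ (hopdist E' w' p.1 p.2 : ℝ) := by exact_mod_cast hbd
        linarith
      have hp' : (p.1, p.2) = p := rfl
      rw [hp'] at hk
      linarith
    calc (wpotential E w H β : ℝ) / 2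
        = ∑ p ∈ Bad, (hopdist E' w' p.1 p.2 : ℝ) / 2 := by rw [hφBad, Finset.sum_div]
      _ ≤ ∑ p ∈ Bad, ∑ q ∈ Ffin, ((c p H : ℝ) - (c p (H ∪ {q}) : ℝ)) :=
          Finset.sum_le_sum hhalf
      _ = ∑ q ∈ Ffin, ∑ p ∈ Bad, ((c p H : ℝ) - (c p (H ∪ {q}) : ℝ)) := Finset.sum_comm
      _ ≤ ∑ q ∈ Ffin, (wdelta E w H β q : ℝ) := Finset.sum_le_sum hperq
  -- ============== pigeonhole ==============
  by_contra hcon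
  push_neg at hcon
  have hφpos : (0:ℝ) < (wpotential E w H β : ℝ) := by exact_mod_cast hφ
  set x := (exopt n (E.ncard + H.ncard) (β / 2) : ℝ) with hxdef
  rcases Finset.eq_empty_or_nonempty Ffin with hFe | hFne
  · rw [hFe] at hglobal
    simp at hglobal
    linarith
  · have hxpos : (0:ℝ) < x := by
      rcases Nat.eq_zero_or_pos (exopt n (E.ncard + H.ncard) (β / 2)) with h0 | hpos
      · exfalso
        rw [h0] at hFcard
        have hF0 : F.ncard = 0 := Nat.le_zero.mp hFcard
        have : F = ∅ := (Set.ncard_eq_zero (Set.toFinite F)).mp hF0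
        obtain ⟨q, hq⟩ := hFne
        rw [hFfinmem] at hq
        rw [this] at hq
        exact hq
      · rw [hxdef]; exact_mod_cast hpos
    have hlt : ∀ q ∈ Ffin, (wdelta E w H β q : ℝ) <
        (wpotential E w H β : ℝ) / (2 * x) := by
      intro q hq
      exact hcon q (hFsubE ((hFfinmem q).mp hq))
    have hsum_lt : ∑ q ∈ Ffin, (wdelta E w H β q : ℝ) <
        ∑ _q ∈ Ffin, (wpotential E w H β : ℝ) / (2 * x) :=
      Finset.sum_lt_sum_of_nonempty hFne hlt
    rw [Finset.sum_const, nsmul_eq_mul] at hsum_lt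
    have hcardle : (Ffin.card : ℝ) ≤ x := by
      have h1 : Ffin.card = F.ncard := (Set.ncard_eq_toFinset_card F (Set.toFinite F)).symm
      rw [h1, hxdef]
      exact_mod_cast hFcard
    have hconst_nonneg : (0:ℝ) ≤ (wpotential E w H β : ℝ) / (2 * x) := by positivity
    have h2 : (Ffin.card : ℝ) * ((wpotential E w H β : ℝ) / (2 * x)) ≤
        x * ((wpotential E w H β : ℝ) / (2 * x)) := by nlinarith
    have h3 : x * ((wpotential E w H β : ℝ) / (2 * x)) = (wpotential E w H β : ℝ) / 2 := by
      field_simp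
    linarith
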